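/- Fix positive integers L and K with K ≤ L, and let the sequence L_1, L_2, ..., L_K be defined recursively by L_k = 2^{⌊log₂((L - Σ_{m=1}^{k-1} L_m)/(K-k+1))⌋}. Then Σ_{k=1}^K L_k ≤ L, each L_k is a power of 2, the sequence is nondecreasing (L_1 ≤ L_2 ≤ ... ≤ L_K), and L_K ≤ 2·L_1. -/

import Mathlib

theorem stmt_6 (L K : ℕ) (hK : 1 ≤ K) (hKL : K ≤ L)
    (Ls : ℕ → ℕ)
    (hrec : ∀ k, k < K →
      Ls k = 2 ^ (Nat.log 2 ((L - ∑ m ∈ Finset.range k, Ls m) / (K - k)))) :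
    (∑ k ∈ Finset.range K, Ls k ≤ L) ∧
    (∀ k, k < K → ∃ n : ℕ, Ls k = 2 ^ n) ∧
    (∀ j k, j ≤ k → k < K → Ls j ≤ Ls k) ∧
    Ls (K - 1) ≤ 2 * Ls 0 := by
  set S : ℕ → ℕ := fun k => ∑ m ∈ Finset.range k, Ls m with hS
  have hrec' : ∀ k, k < K → Ls k = 2 ^ (Nat.log 2 ((L - S k) / (K - k))) :=
    hrec
  have hSsucc : ∀ k, S (k + 1) = S k + Ls k := by
    intro k; simp [hS, Finset.sum_range_succ]
  have hLpos : ∀ k, k < K → 0 < Ls k := by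
    intro k hk; rw [hrec' k hk]; positivity
  -- key : feasibility gives the strong bound
  have key : ∀ k, k < K → S k + (K - k) ≤ L → S k + (K - k) * Ls k ≤ L := by
    intro k hk hIk
    have hpos : 0 < K - k := by omega
    have hSL : S k ≤ L := by omega
    have hle : K - k ≤ L - S k := by omega
    have hLq : Ls k ≤ (L - S k) / (K - k) := by
      rw [hrec' k hk]
      exact Nat.pow_log_le_self 2 (by
        have := (Nat.one_le_div_iff hpos).mpr hle; omega)
    have h1 : Ls k * (K - k) ≤ L - S k :=
      (Nat.le_div_iff_mul_le hpos).mp hLq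
    have h2 := (Nat.le_sub_iff_add_le hSL).mp h1
    rw [mul_comm] at h2; omega
  -- invariant I : feasibility propagates
  have hI : ∀ k, k ≤ K → S k + (K - k) ≤ L := by
    intro k
    induction k with
    | zero => intro _; simpa [hS] using hKL
    | succ k ih =>
      intro hk1
      have hk : k < K := hk1
      have hkey := key k hk (ih (le_of_lt hk))
      have hsplit : (K - k) * Ls k = (K - (k+1)) * Ls k + Ls k := by
        have : K - k = (K - (k+1)) + 1 := by omega
        rw [this, add_mul, one_mul]
      have hge : K - (k+1) ≤ (K - (k+1)) * Ls k :=
        Nat.le_mul_of_pos_right _ (hLpos k hk)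
      rw [hSsucc]; omega
  -- adjacent monotonicity
  have adj : ∀ k, k + 1 < K → Ls k ≤ Ls (k + 1) := by
    intro k hk1
    have hk : k < K := by omega
    have hkey := key k hk (hI k (le_of_lt hk))
    have hpos : 0 < K - (k+1) := by omega
    have hsplit : (K - k) * Ls k = (K - (k+1)) * Ls k + Ls k := by
      have : K - k = (K - (k+1)) + 1 := by omega
      rw [this, add_mul, one_mul]
    have hSL : S (k+1) ≤ L := by
      have := hI (k+1) (le_of_lt hk1); omega
    have h1 : Ls k * (K - (k+1)) ≤ L - S (k+1) := by
      rw [Nat.le_sub_iff_add_le hSL, mul_comm, hSsucc]; omega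
    have h2 : Ls k ≤ (L - S (k+1)) / (K - (k+1)) :=
      (Nat.le_div_iff_mul_le hpos).mpr h1
    calc Ls k = 2 ^ Nat.log 2 (Ls k) := by
          rw [hrec' k hk, Nat.log_pow (by norm_num)]
      _ ≤ 2 ^ Nat.log 2 ((L - S (k+1)) / (K - (k+1))) :=
          Nat.pow_le_pow_right (by norm_num) (Nat.log_mono_right (by
            calc Ls k ≤ Ls k := le_refl _
              _ ≤ _ := h2))
      _ = Ls (k+1) := (hrec' (k+1) hk1).symm
  -- full monotonicity
  have mono : ∀ j k, j ≤ k → k < K → Ls j ≤ Ls k := by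
    intro j k hjk
    induction k with
    | zero => intro _; have : j = 0 := by omega
              simp [this]
    | succ k ih =>
      intro hk
      rcases Nat.lt_succ_iff_lt_or_eq.mp (Nat.lt_succ_of_le hjk) with h | h
      · exact le_trans (ih (by omega) (by omega)) (adj k hk)
      · simp [h]
  -- Ls 0 facts
  have h0K : (0:ℕ) < K := hK
  have hL0 : Ls 0 = 2 ^ Nat.log 2 (L / K) := by
    have := hrec' 0 h0K; simpa [hS] using this
  -- invariant J
  have hJ : ∀ k, k < K → L < S k + 2 * (K - k + 1) * Ls 0 := by
    intro k
    induction k with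
    | zero =>
      intro _
      have hq : L / K < 2 * Ls 0 := by
        rw [hL0]
        have := Nat.lt_pow_succ_log_self (by norm_num : 1 < 2) (L / K)
        calc L / K < 2 ^ (Nat.log 2 (L / K) + 1) := this
          _ = 2 * 2 ^ Nat.log 2 (L / K) := by ring
      have hlt : L < 2 * Ls 0 * K := (Nat.div_lt_iff_lt_mul h0K).mp hq
      have : 2 * Ls 0 * K ≤ 2 * (K - 0 + 1) * Ls 0 := by
        have : (2 * (K - 0 + 1)) * Ls 0 = 2 * Ls 0 * K + 2 * Ls 0 := by
          simp only [Nat.sub_zero]; ring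
        omega
      simp only [hS] at *
      omega
    | succ k ih =>
      intro hk1
      have hk : k < K := by omega
      have ihk := ih hk
      have hSL : S k ≤ L := by have := hI k (le_of_lt hk); omega
      have heq : K - (k+1) + 1 = K - k := by omega
      rcases le_or_gt (Ls k) (Ls 0) with hsmall | hbig
      · -- Ls k ≤ Ls 0, so the per-slot quotient is < 2 * Ls 0
        have hq : (L - S k) / (K - k) < 2 * Ls 0 := by
          have h1 : (L - S k) / (K - k) < 2 * Ls k := by
            conv_rhs => rw [hrec' k hk]
            have := Nat.lt_pow_succ_log_self (by norm_num : 1 < 2)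
              ((L - S k) / (K - k))
            calc (L - S k) / (K - k) < 2 ^ (Nat.log 2 ((L - S k) / (K - k)) + 1) := this
              _ = 2 * 2 ^ Nat.log 2 ((L - S k) / (K - k)) := by ring
          omega
        have hlt : L - S k < 2 * Ls 0 * (K - k) :=
          (Nat.div_lt_iff_lt_mul (by omega)).mp hq
        have h3 : 2 * (K - (k+1) + 1) * Ls 0 = 2 * Ls 0 * (K - k) := by
          rw [heq]; ring
        have h4 : S k ≤ S (k+1) := by rw [hSsucc]; omega
        omega
      · -- Ls 0 < Ls k, powers of 2, so 2 * Ls 0 ≤ Ls k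
        have h2 : 2 * Ls 0 ≤ Ls k := by
          rw [hL0] at hbig ⊢
          rw [hrec' k hk] at hbig ⊢
          have := (Nat.pow_lt_pow_iff_right (by norm_num : 1 < 2)).mp hbig
          calc 2 * 2 ^ Nat.log 2 (L / K)
              = 2 ^ (Nat.log 2 (L / K) + 1) := by ring
            _ ≤ _ := Nat.pow_le_pow_right (by norm_num) (by omega)
        have h3 : 2 * (K - k + 1) * Ls 0
            = 2 * (K - (k+1) + 1) * Ls 0 + 2 * Ls 0 := by
          have : K - k + 1 = (K - (k+1) + 1) + 1 := by omega
          rw [this]; ring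
        have h4 := hSsucc k
        omega
  -- assemble
  refine ⟨?_, ?_, ?_, ?_⟩
  · have := hI K le_rfl; simpa using this
  · intro k hk; exact ⟨_, hrec' k hk⟩
  · intro j k hjk hk; exact mono j k hjk hk
  · have hk1 : K - 1 < K := by omega
    have hJ1 := hJ (K - 1) hk1
    have heq : K - (K - 1) = 1 := by omega
    have hI1 := hI (K - 1) (by omega)
    have hrec1 : Ls (K - 1) = 2 ^ Nat.log 2 (L - S (K - 1)) := by
      have := hrec' (K - 1) hk1
      rw [heq] at this; simpa [hS, Nat.div_one] using this
    have hne : L - S (K - 1) ≠ 0 := by omega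
    have hle : Ls (K - 1) ≤ L - S (K - 1) := by
      rw [hrec1]; exact Nat.pow_log_le_self 2 hne
    have hlt : Ls (K - 1) < 4 * Ls 0 := by
      have : 2 * (K - (K - 1) + 1) * Ls 0 = 4 * Ls 0 := by rw [heq]
      omega
    rw [hL0] at hlt ⊢
    rw [hrec1] at hlt ⊢
    have h4 : (4 : ℕ) * 2 ^ Nat.log 2 (L / K) = 2 ^ (Nat.log 2 (L / K) + 2) := by
      ring
    rw [h4] at hlt
    have := (Nat.pow_lt_pow_iff_right (by norm_num : 1 < 2)).mp hlt
    calc (2:ℕ) ^ Nat.log 2 (L - S (K - 1))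
        ≤ 2 ^ (Nat.log 2 (L / K) + 1) := Nat.pow_le_pow_right (by norm_num) (by omega)
      _ = 2 * 2 ^ Nat.log 2 (L / K) := by ring
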